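/- For fixed b ≥ 0, the map λ ↦ P_λ(λ̂ ≤ b) is monotonically decreasing in λ on (0,∞), where λ̂ = D/(Σ_{i=1}^D X_{i:n} + (n-D)T) is computed from n i.i.d. Exp(λ) lifetimes truncated at time T. -/

import Mathlib

open MeasureTheory ProbabilityTheory Finset

/-- The number of failures in `[0, T]` of a lifetime vector `v`. -/
noncomputable def numFail (n : ℕ) (T : ℝ) (v : Fin n → ℝ) : ℕ :=
  (univ.filter fun i => v i ≤ T).card

/-- The estimator `λ̂ = D / (Σ_{v i ≤ T} v i + (n - D) T)` computed from a lifetime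
vector `v` truncated at time `T` (equal to `0` when `D = 0`). -/
noncomputable def estimator (n : ℕ) (T : ℝ) (v : Fin n → ℝ) : ℝ :=
  (numFail n T v : ℝ) /
    ((∑ i ∈ univ.filter fun i => v i ≤ T, v i) + (n - numFail n T v : ℕ) * T)

lemma denom_eq (n : ℕ) (T : ℝ) (v : Fin n → ℝ) :
    (∑ i ∈ univ.filter fun i => v i ≤ T, v i) + ((n - numFail n T v : ℕ) : ℝ) * T
      = ∑ i, min (v i) T := by
  classical
  have hsplit := Finset.sum_filter_add_sum_filter_not (univ : Finset (Fin n))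
    (fun i => v i ≤ T) (fun i => min (v i) T)
  have h1 : ∑ i ∈ univ.filter fun i => v i ≤ T, min (v i) T
      = ∑ i ∈ univ.filter fun i => v i ≤ T, v i :=
    Finset.sum_congr rfl fun i hi => min_eq_left (Finset.mem_filter.mp hi).2
  have h2 : ∑ i ∈ univ.filter fun i => ¬ v i ≤ T, min (v i) T
      = ((univ.filter fun i => ¬ v i ≤ T).card : ℝ) * T := by
    rw [Finset.sum_congr rfl fun i hi =>
      min_eq_right (le_of_lt (lt_of_not_ge (Finset.mem_filter.mp hi).2))]
    simp [mul_comm]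
  have hcard : (univ.filter fun i => ¬ v i ≤ T).card = n - numFail n T v := by
    have := Finset.card_filter_add_card_filter_not
      (s := (univ : Finset (Fin n))) (p := fun i => v i ≤ T)
    simp only [Finset.card_univ, Fintype.card_fin] at this
    rw [numFail]
    omega
  rw [← hsplit, h1, h2, hcard]

lemma estimator_eq (n : ℕ) (T : ℝ) (v : Fin n → ℝ) :
    estimator n T v = (numFail n T v : ℝ) / ∑ i, min (v i) T := by
  rw [estimator, denom_eq]

lemma numFail_cast (n : ℕ) (T : ℝ) (v : Fin n → ℝ) :
    ((numFail n T v : ℕ) : ℝ) = ∑ i, if v i ≤ T then (1 : ℝ) else 0 := by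
  classical
  rw [numFail, Finset.card_filter]
  push_cast
  rfl

lemma measurable_estimator (n : ℕ) (T : ℝ) : Measurable (estimator n T) := by
  have h1 : Measurable fun v : Fin n → ℝ => ((numFail n T v : ℕ) : ℝ) := by
    simp only [numFail_cast]
    refine Finset.measurable_sum _ fun i _ => Measurable.ite ?_ measurable_const
      measurable_const
    exact measurableSet_le (measurable_pi_apply i) measurable_const
  have h2 : Measurable fun v : Fin n → ℝ => ∑ i, min (v i) T :=
    Finset.measurable_sum _ fun i _ => (measurable_pi_apply i).min measurable_const
  have he : estimator n T = fun v => (numFail n T v : ℝ) / ∑ i, min (v i) T :=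
    funext (estimator_eq n T)
  rw [he]
  exact h1.div h2

/-- Key monotonicity: shrinking all (nonnegative) lifetimes increases the estimator,
hence if the shrunk estimator is `≤ b` then so is the original. -/
lemma estimator_mono {n : ℕ} {T b c : ℝ} (hT : 0 < T) (hb : 0 ≤ b)
    (hc0 : 0 < c) (hc1 : c ≤ 1) (v : Fin n → ℝ) (hv : ∀ i, 0 ≤ v i)
    (h : estimator n T (fun i => c * v i) ≤ b) : estimator n T v ≤ b := by
  classical
  set u : Fin n → ℝ := fun i => c * v i with hu_def
  have hu0 : ∀ i, 0 ≤ u i := fun i => mul_nonneg hc0.le (hv i)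
  have huv : ∀ i, u i ≤ v i := fun i => mul_le_of_le_one_left (hv i) hc1
  rw [estimator_eq] at h ⊢
  set Su : ℝ := ∑ i, min (u i) T with hSu_def
  set Sv : ℝ := ∑ i, min (v i) T with hSv_def
  have hS : Su ≤ Sv :=
    Finset.sum_le_sum fun i _ => min_le_min (huv i) le_rfl
  have hSu0 : 0 ≤ Su :=
    Finset.sum_nonneg fun i _ => le_min (hu0 i) hT.le
  have hD : numFail n T v ≤ numFail n T u := by
    apply Finset.card_le_card
    exact Finset.monotone_filter_right univ fun i _ hi => (huv i).trans hi
  rcases eq_or_lt_of_le hSu0 with hSu | hSu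
  · -- Su = 0, so all u i = 0, so all v i = 0, so Sv = 0 and estimator = 0
    have hall : ∀ i ∈ (univ : Finset (Fin n)), min (u i) T = 0 :=
      (Finset.sum_eq_zero_iff_of_nonneg fun i _ => le_min (hu0 i) hT.le).mp hSu.symm
    have hv0 : ∀ i, v i = 0 := by
      intro i
      have hmin := hall i (Finset.mem_univ i)
      have hui : u i = 0 := by
        rcases le_total (u i) T with hle | hle
        · rwa [min_eq_left hle] at hmin
        · rw [min_eq_right hle] at hmin; linarith
      have := hu0 i
      have : c * v i = 0 := hui
      rcases mul_eq_zero.mp this with h' | h'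
      · exact absurd h' hc0.ne'
      · exact h'
    have hSv : Sv = 0 := by
      simp [hSv_def, hv0, min_eq_left hT.le]
    rw [hSv, div_zero]
    exact hb
  · -- 0 < Su
    refine le_trans ?_ h
    exact div_le_div₀ (Nat.cast_nonneg _) (Nat.cast_le.mpr hD) hSu hS

lemma expMeasure_Iic {r : ℝ} (hr : 0 < r) (x : ℝ) :
    expMeasure r (Set.Iic x)
      = ENNReal.ofReal (if 0 ≤ x then 1 - Real.exp (-(r * x)) else 0) := by
  rw [expMeasure, gammaMeasure, withDensity_apply _ measurableSet_Iic]
  have : ∀ y, gammaPDF 1 r y = exponentialPDF r y := fun y => rfl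
  simp_rw [this]
  exact lintegral_exponentialPDF_eq_antiDeriv hr x

lemma expMeasure_neg {r : ℝ} : expMeasure r (Set.Iio 0) = 0 := by
  rw [expMeasure, gammaMeasure, withDensity_apply _ measurableSet_Iio]
  exact lintegral_gammaPDF_of_nonpos le_rfl

/-- Scaling an `Exp(l1)` variable by `l1 / l2` gives an `Exp(l2)` variable. -/
lemma measurePreserving_scale {l1 l2 : ℝ} (h1 : 0 < l1) (h2 : 0 < l2) :
    MeasurePreserving (fun x => (l1 / l2) * x) (expMeasure l1) (expMeasure l2) := by
  have hc : 0 < l1 / l2 := div_pos h1 h2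
  refine ⟨measurable_const_mul _, ?_⟩
  haveI : IsProbabilityMeasure (expMeasure l1) := isProbabilityMeasure_expMeasure h1
  haveI : IsProbabilityMeasure ((expMeasure l1).map (fun x => (l1 / l2) * x)) :=
    Measure.isProbabilityMeasure_map (measurable_const_mul _).aemeasurable
  refine Measure.ext_of_Iic _ _ fun x => ?_
  rw [Measure.map_apply (measurable_const_mul _) measurableSet_Iic]
  have hpre : (fun y => (l1 / l2) * y) ⁻¹' Set.Iic x = Set.Iic (x / (l1 / l2)) := by
    ext y
    simp only [Set.mem_preimage, Set.mem_Iic]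
    rw [le_div_iff₀ hc, mul_comm]
  rw [hpre, expMeasure_Iic h1, expMeasure_Iic h2]
  have hiff : 0 ≤ x / (l1 / l2) ↔ 0 ≤ x := by
    rw [le_div_iff₀ hc, zero_mul]
  by_cases hx : 0 ≤ x
  · rw [if_pos hx, if_pos (hiff.mpr hx)]
    have : l1 * (x / (l1 / l2)) = l2 * x := by
      field_simp
    rw [this]
  · rw [if_neg hx, if_neg (fun h => hx (hiff.mp h))]

/-- For fixed `b ≥ 0`, the map `λ ↦ P_λ(λ̂ ≤ b)` is monotonically decreasing in `λ` on
`(0, ∞)`, where `λ̂` is computed from `n` i.i.d. `Exp(λ)` lifetimes truncated at `T`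
(realized canonically as the product measure `(expMeasure λ)^⊗n`). -/
theorem stmt_17 (n : ℕ) (hn : 1 ≤ n) (T : ℝ) (hT : 0 < T) (b : ℝ) (hb : 0 ≤ b) :
    ∀ lam₁ lam₂ : ℝ, 0 < lam₁ → lam₁ ≤ lam₂ →
      (Measure.pi fun _ : Fin n => expMeasure lam₂) {v | estimator n T v ≤ b} ≤
        (Measure.pi fun _ : Fin n => expMeasure lam₁) {v | estimator n T v ≤ b} := by
  classical
  intro lam₁ lam₂ h1 h12
  have h2 : 0 < lam₂ := h1.trans_le h12
  set c : ℝ := lam₁ / lam₂ with hc_def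
  have hc0 : 0 < c := div_pos h1 h2
  have hc1 : c ≤ 1 := (div_le_one h2).mpr h12
  haveI : ∀ i : Fin n, IsProbabilityMeasure (expMeasure lam₁) :=
    fun _ => isProbabilityMeasure_expMeasure h1
  haveI : IsProbabilityMeasure (expMeasure lam₁) := isProbabilityMeasure_expMeasure h1
  haveI : IsProbabilityMeasure (expMeasure lam₂) := isProbabilityMeasure_expMeasure h2
  have MP : MeasurePreserving (fun (a : Fin n → ℝ) (i : Fin n) => c * a i)
      (Measure.pi fun _ : Fin n => expMeasure lam₁)
      (Measure.pi fun _ : Fin n => expMeasure lam₂) :=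
    MeasureTheory.measurePreserving_pi _ _ fun _ => measurePreserving_scale h1 h2
  have hA : MeasurableSet {v : Fin n → ℝ | estimator n T v ≤ b} :=
    measurableSet_le (measurable_estimator n T) measurable_const
  set A : Set (Fin n → ℝ) := {v | estimator n T v ≤ b} with hA_def
  set N : Set (Fin n → ℝ) := {v | ∃ i, v i < 0} with hN_def
  have hN0 : (Measure.pi fun _ : Fin n => expMeasure lam₁) N = 0 := by
    have hUnion : N = ⋃ i : Fin n, {v : Fin n → ℝ | v i < 0} := by
      ext v; simp [hN_def]
    rw [hUnion]
    refine measure_iUnion_null fun i => ?_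
    have hset : {v : Fin n → ℝ | v i < 0}
        = Set.pi Set.univ (fun j => if j = i then Set.Iio (0 : ℝ) else Set.univ) := by
      ext v
      simp only [Set.mem_setOf_eq, Set.mem_pi, Set.mem_univ, forall_true_left]
      constructor
      · intro h j
        by_cases hj : j = i
        · subst hj; simp [h]
        · simp [hj]
      · intro h
        have := h i
        simpa using this
    rw [hset, Measure.pi_pi]
    refine Finset.prod_eq_zero (Finset.mem_univ i) ?_
    simp [expMeasure_neg]
  rw [← MP.measure_preimage hA.nullMeasurableSet]
  have hsub : (fun (a : Fin n → ℝ) (i : Fin n) => c * a i) ⁻¹' A ⊆ A ∪ N := by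
    intro v hv
    by_cases hneg : ∃ i, v i < 0
    · exact Or.inr hneg
    · push_neg at hneg
      left
      exact estimator_mono hT hb hc0 hc1 v (fun i => hneg i) hv
  calc (Measure.pi fun _ : Fin n => expMeasure lam₁)
        ((fun (a : Fin n → ℝ) (i : Fin n) => c * a i) ⁻¹' A)
      ≤ (Measure.pi fun _ : Fin n => expMeasure lam₁) (A ∪ N) := measure_mono hsub
    _ ≤ (Measure.pi fun _ : Fin n => expMeasure lam₁) A
        + (Measure.pi fun _ : Fin n => expMeasure lam₁) N := measure_union_le _ _
    _ = (Measure.pi fun _ : Fin n => expMeasure lam₁) A := by rw [hN0, add_zero]
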